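/- arXiv:1405.7280 — 6 statements merged into one kernel-verified Lean document; each statement's English description precedes it below -/
import Mathlib

section
/- Let X be a real Hilbert space, let f : X → ℝ be locally Lipschitz at a point x̄ ∈ X, and suppose 0 ∉ ∂f(x̄) (Clarke subdifferential). Then the epigraphical map E : X ⇉ ℝ defined by E(x) := [f(x), ∞) is metrically regular at (x̄, f(x̄)); that is, there exist a constant κ ≥ 0, a neighborhood U of x̄ and a neighborhood V of f(x̄) such that d(x, E⁻¹(u)) ≤ κ · d(u, E(x)) for all x ∈ U and u ∈ V, where E⁻¹(u) = {x' ∈ X : f(x') ≤ u}. -/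
open Filter Metric Set
open scoped Topology RealInnerProductSpace NNReal

variable {X : Type*} [NormedAddCommGroup X] [InnerProductSpace ℝ X] [CompleteSpace X]

/-- The Clarke (generalized) directional derivative
`f°(x; d) = limsup_{(y,t) → (x,0⁺)} (f(y + t d) − f(y))/t`. -/
noncomputable def clarkeDirDeriv (f : X → ℝ) (x d : X) : ℝ :=
  Filter.limsup (fun p : X × ℝ => (f (p.1 + p.2 • d) - f p.1) / p.2)
    ((𝓝 x) ×ˢ (𝓝[>] (0 : ℝ)))

/-- The Clarke (generalized) subdifferential
`∂f(x) = {s : ⟪s, d⟫ ≤ f°(x; d) for all d}`. -/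
def clarkeSubdiff (f : X → ℝ) (x : X) : Set X :=
  {s : X | ∀ d : X, ⟪s, d⟫ ≤ clarkeDirDeriv f x d}

/-- `f` is locally Lipschitz at the point `x`. -/
def LocallyLipschitzAt (f : X → ℝ) (x : X) : Prop :=
  ∃ K : ℝ≥0, ∃ U ∈ 𝓝 x, LipschitzOnWith K f U

/-- `f` is approximately convex at `xbar`: for every `ε > 0` there is `δ > 0` with
`f(y) ≥ f(x) + ⟪s, y − x⟫ − ε‖y − x‖` for all `x, y ∈ B(xbar, δ)` and `s ∈ ∂f(x)`. -/
def ApproxConvexAt (f : X → ℝ) (xbar : X) : Prop :=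
  ∀ ε > (0 : ℝ), ∃ δ > (0 : ℝ), ∀ x ∈ Metric.closedBall xbar δ, ∀ y ∈ Metric.closedBall xbar δ,
    ∀ s ∈ clarkeSubdiff f x, f x + ⟪s, y - x⟫ - ε * ‖y - x‖ ≤ f y

/-- **Metric regularity of the epigraphical map.** If `f` is locally Lipschitz at `xbar`
and `0 ∉ ∂f(xbar)`, then `E(x) := [f(x), ∞)` is metrically regular at `(xbar, f xbar)`:
there are `κ ≥ 0` and neighborhoods `U` of `xbar`, `V` of `f xbar` with
`d(x, E⁻¹(u)) ≤ κ · d(u, E(x))` for all `x ∈ U`, `u ∈ V`, where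
`E⁻¹(u) = {x' : f x' ≤ u}`. -/
theorem metric_regularity_of_epigraphical_map
    (f : X → ℝ) (xbar : X)
    (hf : LocallyLipschitzAt f xbar)
    (h0 : (0 : X) ∉ clarkeSubdiff f xbar) :
    ∃ κ : ℝ, 0 ≤ κ ∧ ∃ U ∈ 𝓝 xbar, ∃ V ∈ 𝓝 (f xbar),
      ∀ x ∈ U, ∀ u ∈ V,
        EMetric.infEdist x {x' : X | f x' ≤ u} ≤
          ENNReal.ofReal κ * EMetric.infEdist u (Set.Ici (f x)) := by

  obtain ⟨K, U₀, hU₀, hLip⟩ := hf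
  obtain ⟨d, hd⟩ : ∃ d : X, clarkeDirDeriv f xbar d < 0 := by
    by_contra h
    push_neg at h
    exact h0 fun d => by rw [inner_zero_left]; exact h d
  set c : ℝ := -(clarkeDirDeriv f xbar d) / 2 with hc
  have hc0 : 0 < c := by rw [hc]; linarith
  obtain ⟨ε₁, hε₁, hball⟩ := Metric.mem_nhds_iff.mp hU₀
  set t₀ : ℝ := ε₁ / (2 * ‖d‖ + 2) with ht₀def
  have ht₀ : 0 < t₀ := by positivity
  have ht₀d : t₀ * ‖d‖ ≤ ε₁ / 2 := by
    rw [ht₀def, div_mul_eq_mul_div, div_le_div_iff₀ (by positivity) two_pos]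
    nlinarith [norm_nonneg d]
  have hmem : (Metric.ball xbar (ε₁/2)) ×ˢ (Set.Ioo (0:ℝ) t₀) ∈
      (𝓝 xbar) ×ˢ (𝓝[>] (0:ℝ)) :=
    Filter.prod_mem_prod (Metric.ball_mem_nhds _ (by positivity))
      (Ioo_mem_nhdsGT_of_mem ⟨le_refl 0, ht₀⟩)
  have hbdd : Filter.IsBoundedUnder (· ≤ ·) ((𝓝 xbar) ×ˢ (𝓝[>] (0:ℝ)))
      (fun p : X × ℝ => (f (p.1 + p.2 • d) - f p.1) / p.2) := by
    refine ⟨(K:ℝ) * ‖d‖, ?_⟩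
    rw [Filter.eventually_map]
    filter_upwards [hmem] with p hp
    obtain ⟨hp1, hp2⟩ := hp
    have hp1' : dist p.1 xbar < ε₁/2 := hp1
    have hy : p.1 ∈ U₀ := hball (Metric.mem_ball.mpr (by linarith))
    have hdist : dist (p.1 + p.2 • d) p.1 = p.2 * ‖d‖ := by
      rw [dist_eq_norm, add_sub_cancel_left, norm_smul, Real.norm_eq_abs,
        abs_of_pos hp2.1]
    have hy2 : p.1 + p.2 • d ∈ U₀ := by
      apply hball
      have h1 : dist (p.1 + p.2 • d) xbar ≤ dist (p.1 + p.2 • d) p.1 + dist p.1 xbar :=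
        dist_triangle _ _ _
      have h2 : p.2 * ‖d‖ ≤ t₀ * ‖d‖ :=
        mul_le_mul_of_nonneg_right hp2.2.le (norm_nonneg d)
      rw [hdist] at h1
      exact Metric.mem_ball.mpr (by linarith)
    have hb := hLip.dist_le_mul _ hy2 _ hy
    rw [Real.dist_eq, hdist] at hb
    rw [div_le_iff₀ hp2.1]
    calc f (p.1 + p.2 • d) - f p.1 ≤ |f (p.1 + p.2 • d) - f p.1| := le_abs_self _
      _ ≤ (K:ℝ) * (p.2 * ‖d‖) := hb
      _ = (K:ℝ) * ‖d‖ * p.2 := by ring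
  have hev : ∀ᶠ p in (𝓝 xbar) ×ˢ (𝓝[>] (0:ℝ)),
      (f (p.1 + p.2 • d) - f p.1) / p.2 < -c := by
    refine eventually_lt_of_limsup_lt ?_ hbdd
    show clarkeDirDeriv f xbar d < -c
    rw [hc]; linarith
  obtain ⟨s, hs, tset, hts, hsub⟩ := Filter.mem_prod_iff.mp hev
  obtain ⟨δ, hδ0, hδs⟩ := Metric.mem_nhds_iff.mp hs
  obtain ⟨τ, hτ0, hτt⟩ := mem_nhdsGT_iff_exists_Ioo_subset.mp hts
  rw [Set.mem_Ioi] at hτ0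
  refine ⟨‖d‖ / c, by positivity, ?_⟩
  set r : ℝ := min δ (min ε₁ (c * τ / (2 * (K:ℝ) + 2))) with hrdef
  have hr0 : 0 < r := lt_min hδ0 (lt_min hε₁ (by positivity))
  refine ⟨Metric.ball xbar r, Metric.ball_mem_nhds _ hr0,
    Metric.ball (f xbar) (c * τ / 2), Metric.ball_mem_nhds _ (by positivity), ?_⟩
  intro x hx u hu
  by_cases hxu : f x ≤ u
  · have : EMetric.infEdist x {x' : X | f x' ≤ u} = 0 :=
      EMetric.infEdist_zero_of_mem (show x ∈ {x' : X | f x' ≤ u} from hxu)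
    rw [this]; exact zero_le
  · push_neg at hxu
    have hx' : dist x xbar < r := hx
    have hxU₀ : x ∈ U₀ := hball (Metric.mem_ball.mpr
      (lt_of_lt_of_le hx' ((min_le_right _ _).trans (min_le_left _ _))))
    have hxbarU₀ : xbar ∈ U₀ := mem_of_mem_nhds hU₀
    have hfx : |f x - f xbar| ≤ (K:ℝ) * r := by
      have h1 := hLip.dist_le_mul _ hxU₀ _ hxbarU₀
      rw [Real.dist_eq] at h1
      exact h1.trans (mul_le_mul_of_nonneg_left hx'.le K.coe_nonneg)
    have hu' : |u - f xbar| < c * τ / 2 := hu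
    have hKr : (K:ℝ) * r ≤ c * τ / 2 := by
      have h1 : r ≤ c * τ / (2 * (K:ℝ) + 2) := (min_le_right _ _).trans (min_le_right _ _)
      have h2 : (0:ℝ) < 2 * (K:ℝ) + 2 := by positivity
      have h3 : (K:ℝ) * r ≤ (K:ℝ) * (c * τ / (2 * (K:ℝ) + 2)) :=
        mul_le_mul_of_nonneg_left h1 K.coe_nonneg
      refine h3.trans ?_
      rw [mul_div_assoc', div_le_div_iff₀ h2 two_pos]
      nlinarith [mul_pos hc0 hτ0, K.coe_nonneg]
    set T : ℝ := (f x - u) / c with hT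
    have hT0 : 0 < T := div_pos (by linarith) hc0
    have hfxu : f x - u < c * τ := by
      have h1 : f x - f xbar ≤ |f x - f xbar| := le_abs_self _
      have h2 : f xbar - u ≤ |u - f xbar| := by rw [abs_sub_comm]; exact le_abs_self _
      linarith
    have hTτ : T < τ := by rw [hT, div_lt_iff₀ hc0]; linarith
    have hxs : x ∈ s := hδs (Metric.mem_ball.mpr (lt_of_lt_of_le hx' (min_le_left _ _)))
    have hTt : T ∈ tset := hτt ⟨hT0, hTτ⟩
    have hkey : (f (x + T • d) - f x) / T < -c := hsub (Set.mk_mem_prod hxs hTt)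
    have hfy : f (x + T • d) ≤ u := by
      have h1 := (div_lt_iff₀ hT0).mp hkey
      have hcT : c * T = f x - u := by
        rw [hT, mul_div_assoc']
        field_simp
      nlinarith
    have hym : (x + T • d) ∈ {x' : X | f x' ≤ u} := hfy
    have hedist : edist x (x + T • d) = ENNReal.ofReal (T * ‖d‖) := by
      rw [edist_dist, dist_eq_norm, sub_add_cancel_left, norm_neg, norm_smul,
        Real.norm_eq_abs, abs_of_pos hT0]
    have hstep : EMetric.infEdist x {x' : X | f x' ≤ u} ≤ ENNReal.ofReal (T * ‖d‖) := by
      rw [← hedist]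
      exact EMetric.infEdist_le_edist_of_mem hym
    have hR : ENNReal.ofReal (f x - u) ≤ EMetric.infEdist u (Set.Ici (f x)) := by
      refine EMetric.le_infEdist.mpr ?_
      intro v hv
      rw [edist_dist, Real.dist_eq, abs_sub_comm, abs_of_nonneg (by linarith [Set.mem_Ici.mp hv] : (0:ℝ) ≤ v - u)]
      exact ENNReal.ofReal_le_ofReal (by linarith [Set.mem_Ici.mp hv])
    calc EMetric.infEdist x {x' : X | f x' ≤ u} ≤ ENNReal.ofReal (T * ‖d‖) := hstep
      _ = ENNReal.ofReal (‖d‖ / c) * ENNReal.ofReal (f x - u) := by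
          rw [← ENNReal.ofReal_mul (by positivity)]
          congr 1
          rw [hT]; ring
      _ ≤ ENNReal.ofReal (‖d‖ / c) * EMetric.infEdist u (Set.Ici (f x)) :=
          mul_le_mul_right hR _
end

section
/- Let X be a real Hilbert space, let f : X → ℝ, let d ∈ X and μ > 0 be such that f is locally Lipschitz at x̄ and the Clarke directional derivative satisfies f°(x̄; d) < −μ. Then there exists δ > 0 such that for every x ∈ B(x̄, δ), the vector (d, −μ) belongs to the tangent (contingent) cone to the epigraph epi f := {(x', r) ∈ X × ℝ : r ≥ f(x')} at the point (x, f(x)); that is, there exist sequences t_n ↘ 0, u_n → d and v_n → −μ with (x, f(x)) + t_n·(u_n, v_n) ∈ epi f for all n. -/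
open Filter Metric Set
open scoped Topology RealInnerProductSpace NNReal

variable {X : Type*} [NormedAddCommGroup X] [InnerProductSpace ℝ X] [CompleteSpace X]

/-- If `f` is locally Lipschitz at `xbar` and `f°(xbar; d) < −μ` with `μ > 0`, then there
is `δ > 0` such that for every `x ∈ B(xbar, δ)` the vector `(d, −μ)` lies in the
contingent (tangent) cone to `epi f` at `(x, f x)`: there are sequences `t_n ↘ 0`,
`u_n → d`, `v_n → −μ` with `(x, f x) + t_n (u_n, v_n) ∈ epi f` for all `n`. -/
theorem mem_tangentCone_epigraph
    (f : X → ℝ) (xbar d : X) (μ : ℝ) (hμ : 0 < μ)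
    (hf : LocallyLipschitzAt f xbar)
    (hdd : clarkeDirDeriv f xbar d < -μ) :
    ∃ δ > (0 : ℝ), ∀ x ∈ Metric.closedBall xbar δ,
      ∃ (t : ℕ → ℝ) (u : ℕ → X) (v : ℕ → ℝ),
        (∀ n, 0 < t n) ∧ Antitone t ∧ Tendsto t atTop (𝓝 0) ∧
        Tendsto u atTop (𝓝 d) ∧ Tendsto v atTop (𝓝 (-μ)) ∧
        ∀ n, f (x + t n • u n) ≤ f x + t n * v n := by
  obtain ⟨K, U, hU, hK⟩ := hf
  obtain ⟨r, hr, hrU⟩ := Metric.mem_nhds_iff.mp hU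
  set c : ℝ := r / (2 * (‖d‖ + 1)) with hc
  have hdpos : (0:ℝ) < ‖d‖ + 1 := by positivity
  have hcpos : 0 < c := by positivity
  -- boundedness of the difference quotient
  have hbd : IsBoundedUnder (· ≤ ·) ((𝓝 xbar) ×ˢ (𝓝[>] (0 : ℝ)))
      (fun p : X × ℝ => (f (p.1 + p.2 • d) - f p.1) / p.2) := by
    refine ⟨(K : ℝ) * ‖d‖, ?_⟩
    rw [eventually_map]
    have h1 : ∀ᶠ y in 𝓝 xbar, y ∈ ball xbar (r/2) :=
      ball_mem_nhds _ (by positivity)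
    have h2 : ∀ᶠ s in 𝓝[>] (0:ℝ), s ∈ Ioo 0 c :=
      Ioo_mem_nhdsGT_of_mem ⟨le_refl 0, hcpos⟩
    filter_upwards [h1.prod_inl (𝓝[>] (0:ℝ)), h2.prod_inr (𝓝 xbar)] with p hy ht
    have htpos : 0 < p.2 := ht.1
    have hyU : p.1 ∈ U := hrU (by
      simp only [mem_ball] at hy ⊢; linarith [hy])
    have hy2U : p.1 + p.2 • d ∈ U := by
      apply hrU
      rw [mem_ball] at hy ⊢
      have : dist (p.1 + p.2 • d) xbar ≤ dist p.1 xbar + ‖p.2 • d‖ := by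
        rw [dist_eq_norm, dist_eq_norm]
        have : p.1 + p.2 • d - xbar = (p.1 - xbar) + p.2 • d := by abel
        rw [this]; exact norm_add_le _ _
      have hnd : ‖p.2 • d‖ ≤ c * ‖d‖ := by
        rw [norm_smul, Real.norm_eq_abs, abs_of_pos htpos]
        exact mul_le_mul_of_nonneg_right ht.2.le (norm_nonneg d)
      have hcd : c * ‖d‖ < r / 2 := by
        rw [hc, div_mul_eq_mul_div, div_lt_iff₀ (by positivity)]
        have : ‖d‖ < ‖d‖ + 1 := by linarith
        nlinarith [norm_nonneg d, hr]
      linarith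
    have hlip := hK.dist_le_mul _ hy2U _ hyU
    rw [div_le_iff₀ htpos]
    calc f (p.1 + p.2 • d) - f p.1 ≤ |f (p.1 + p.2 • d) - f p.1| := le_abs_self _
      _ = dist (f (p.1 + p.2 • d)) (f p.1) := (Real.dist_eq _ _).symm
      _ ≤ K * dist (p.1 + p.2 • d) p.1 := hlip
      _ = K * ‖p.2 • d‖ := by rw [dist_eq_norm]; congr 1; congr 1; abel
      _ = K * (p.2 * ‖d‖) := by
          rw [norm_smul, Real.norm_eq_abs, abs_of_pos htpos]
      _ = (K : ℝ) * ‖d‖ * p.2 := by ring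

  have hev : ∀ᶠ p in (𝓝 xbar) ×ˢ (𝓝[>] (0:ℝ)),
      (f (p.1 + p.2 • d) - f p.1) / p.2 < -μ :=
    eventually_lt_of_limsup_lt hdd hbd
  rw [eventually_prod_iff] at hev
  obtain ⟨pa, hpa, pb, hpb, hprop⟩ := hev
  rw [Metric.eventually_nhds_iff] at hpa
  obtain ⟨δ', hδ', hball⟩ := hpa
  obtain ⟨η, hη, hIoo⟩ := mem_nhdsGT_iff_exists_Ioo_subset.mp hpb
  rw [mem_Ioi] at hη
  refine ⟨δ'/2, by positivity, fun x hx => ?_⟩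
  refine ⟨fun n => (η/2) / (n+1), fun _ => d, fun _ => -μ, ?_, ?_, ?_, tendsto_const_nhds,
    tendsto_const_nhds, ?_⟩
  · intro n; positivity
  · intro m n hmn
    apply div_le_div_of_nonneg_left (by positivity) (by positivity)
    have : (m:ℝ) ≤ n := Nat.cast_le.mpr hmn
    linarith
  · have := tendsto_one_div_add_atTop_nhds_zero_nat (𝕜 := ℝ)
    have h2 := this.const_mul (η/2)
    simp only [mul_zero] at h2
    convert h2 using 2 with n
    rw [mul_one_div]
  · intro n
    have htn : (0:ℝ) < (η/2) / (n+1) := by positivity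
    have htnη : (η/2) / (n+1) < η := by
      have h1 : (η/2) / (n+1) ≤ η/2 := by
        apply div_le_self (by positivity)
        have : (0:ℝ) ≤ (n:ℝ) := Nat.cast_nonneg n
        linarith
      linarith
    have hpax : pa x := by
      apply hball
      rw [mem_closedBall] at hx
      linarith
    have hpbt : pb ((η/2) / (n+1)) := hIoo ⟨htn, htnη⟩
    have := hprop hpax hpbt
    rw [div_lt_iff₀ htn] at this
    linarith
end

section
/- Let X be a real Hilbert space and let x, x', p ∈ X. Set x̃ := (2/3)·x' + (1/3)·x. If ⟨x − x̃, p − x̃⟩ ≤ 0, then ‖x' − p‖² ≤ ‖x − p‖² − (1/3)·‖x' − x‖². -/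
open Filter Metric Set
open scoped Topology RealInnerProductSpace

/-- If `x̃ = (2/3) x' + (1/3) x` and `⟪x − x̃, p − x̃⟫ ≤ 0`, then
`‖x' − p‖² ≤ ‖x − p‖² − (1/3)‖x' − x‖²`. -/
theorem dist_sq_decrease_of_obtuse
    {X : Type*} [NormedAddCommGroup X] [InnerProductSpace ℝ X] [CompleteSpace X]
    (x x' p : X)
    (h : ⟪x - ((2 / 3 : ℝ) • x' + (1 / 3 : ℝ) • x),
          p - ((2 / 3 : ℝ) • x' + (1 / 3 : ℝ) • x)⟫ ≤ 0) :
    ‖x' - p‖ ^ 2 ≤ ‖x - p‖ ^ 2 - (1 / 3) * ‖x' - x‖ ^ 2 := by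
  have e1 : ‖x' - p‖ ^ 2 = ⟪x' - p, x' - p⟫ := (real_inner_self_eq_norm_sq _).symm
  have e2 : ‖x - p‖ ^ 2 = ⟪x - p, x - p⟫ := (real_inner_self_eq_norm_sq _).symm
  have e3 : ‖x' - x‖ ^ 2 = ⟪x' - x, x' - x⟫ := (real_inner_self_eq_norm_sq _).symm
  simp only [inner_sub_left, inner_sub_right, inner_add_left, inner_add_right,
    inner_smul_left, inner_smul_right, RCLike.conj_to_real] at h e1 e2 e3 ⊢
  rw [e1, e2, e3]
  have c1 : ⟪x, x'⟫ = ⟪x', x⟫ := real_inner_comm _ _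
  have c2 : ⟪x, p⟫ = ⟪p, x⟫ := real_inner_comm _ _
  have c3 : ⟪x', p⟫ = ⟪p, x'⟫ := real_inner_comm _ _
  nlinarith [h]
end

section
/- Let X be a real Hilbert space, let f : X → ℝ, let x, p ∈ X, s ∈ X, and let ε > 0, ε_ac ≥ 0, κ ≥ 0 with κ·ε_ac ≤ 1/3. Suppose f(p) = −ε, the approximate-convexity inequality f(p) ≥ f(x) + ⟨s, p − x⟩ − ε_ac·‖p − x‖ holds, and ‖x − p‖ ≤ κ·(f(x) + ε) with f(x) + ε > 0. Then ⟨s, p − x⟩ ≤ −(1 − κ·ε_ac)·(ε + f(x)) ≤ −(2/3)·(ε + f(x)); in particular, if s ≠ 0 and x̃ := x − (2/3)·((ε + f(x))/‖s‖²)·s, then ⟨s, p − x̃⟩ ≤ 0. -/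
open Filter Metric Set
open scoped Topology RealInnerProductSpace

/-- Suppose `f p = −ε`, the approximate-convexity inequality
`f p ≥ f x + ⟪s, p − x⟫ − ε_ac ‖p − x‖` holds, `‖x − p‖ ≤ κ (f x + ε)` with
`f x + ε > 0`, and `κ ε_ac ≤ 1/3`. Then
`⟪s, p − x⟫ ≤ −(1 − κ ε_ac)(ε + f x) ≤ −(2/3)(ε + f x)`; in particular, if `s ≠ 0` and
`x̃ = x − (2/3)((ε + f x)/‖s‖²) s`, then `⟪s, p − x̃⟫ ≤ 0`. -/
theorem inner_le_of_approx_convex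
    {X : Type*} [NormedAddCommGroup X] [InnerProductSpace ℝ X] [CompleteSpace X]
    (f : X → ℝ) (x p s : X) (ε εac κ : ℝ)
    (hε : 0 < ε) (hac : 0 ≤ εac) (hκ : 0 ≤ κ) (hκac : κ * εac ≤ 1 / 3)
    (hp : f p = -ε)
    (happrox : f x + ⟪s, p - x⟫ - εac * ‖p - x‖ ≤ f p)
    (hdist : ‖x - p‖ ≤ κ * (f x + ε)) (hfx : 0 < f x + ε) :
    ⟪s, p - x⟫ ≤ -(1 - κ * εac) * (ε + f x) ∧
    -(1 - κ * εac) * (ε + f x) ≤ -(2 / 3) * (ε + f x) ∧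
    (s ≠ 0 →
      ⟪s, p - (x - ((2 / 3) * ((ε + f x) / ‖s‖ ^ 2)) • s)⟫ ≤ 0) := by
  have hnorm : ‖p - x‖ = ‖x - p‖ := norm_sub_rev _ _
  have h1 : ⟪s, p - x⟫ ≤ -(1 - κ * εac) * (ε + f x) := by
    have h2 : εac * ‖p - x‖ ≤ εac * (κ * (f x + ε)) := by
      rw [hnorm]; exact mul_le_mul_of_nonneg_left hdist hac
    rw [hp] at happrox
    nlinarith [happrox, h2]
  refine ⟨h1, ?_, ?_⟩
  · nlinarith
  · intro hs
    have hs2 : (0:ℝ) < ‖s‖ ^ 2 := pow_pos (norm_pos_iff.mpr hs) 2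
    have : p - (x - ((2 / 3) * ((ε + f x) / ‖s‖ ^ 2)) • s)
        = (p - x) + ((2 / 3) * ((ε + f x) / ‖s‖ ^ 2)) • s := by abel
    rw [this, inner_add_right, real_inner_smul_right, real_inner_self_eq_norm_sq]
    have : (2 / 3) * ((ε + f x) / ‖s‖ ^ 2) * ‖s‖ ^ 2 = (2 / 3) * (ε + f x) := by
      field_simp
    rw [this]
    nlinarith
end

section
/- Let X be a real Hilbert space, let f : X → ℝ, let ε > 0, ε_ac ≥ 0, κ > 0 with κ·ε_ac ≤ 1/3. Let x ∈ X with f(x) > 0, let s^{(1)}, …, s^{(J)} ∈ X be nonzero vectors, set L := max_{j} ‖s^{(j)}‖, and let P := {x' ∈ X : f(x) + ⟨s^{(j)}, x' − x⟩ ≤ −ε for all j ∈ {1,…,J}}. Assume P is nonempty, let x⁺ be the metric projection of x onto P, and let p ∈ X satisfy f(p) = −ε, ‖x − p‖ ≤ κ·(f(x) + ε), and the approximate-convexity inequalities f(p) ≥ f(x) + ⟨s^{(j)}, p − x⟩ − ε_ac·‖p − x‖ for all j. Then ‖x⁺ − p‖² ≤ (1 − 1/(3·κ²·L²))·‖x −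 p‖². -/
open Filter Metric Set
open scoped Topology RealInnerProductSpace

/-- **Linear decrease of the distance to the sublevel set.** With `f x > 0`, nonzero
vectors `s 1, …, s J` with `L = max j, ‖s j‖`, the nonempty polyhedron
`P = {x' : f x + ⟪s j, x' − x⟫ ≤ −ε for all j}`, `x⁺` the metric projection of `x`
onto `P`, and `p` with `f p = −ε`, `‖x − p‖ ≤ κ (f x + ε)` satisfying the
approximate-convexity inequalities (`κ ε_ac ≤ 1/3`, `κ > 0`), one has
`‖x⁺ − p‖² ≤ (1 − 1/(3 κ² L²)) ‖x − p‖²`. -/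
theorem proj_step_linear_decrease
    {X : Type*} [NormedAddCommGroup X] [InnerProductSpace ℝ X] [CompleteSpace X]
    (f : X → ℝ) (ε εac κ L : ℝ) (hε : 0 < ε) (hac : 0 ≤ εac)
    (hκ : 0 < κ) (hκac : κ * εac ≤ 1 / 3)
    (x : X) (hfx : 0 < f x)
    (J : ℕ) (hJ : 0 < J) (s : Fin J → X) (hs : ∀ j, s j ≠ 0)
    (hL_ub : ∀ j, ‖s j‖ ≤ L) (hL_mem : ∃ j, ‖s j‖ = L)
    (hPne : Set.Nonempty {x' : X | ∀ j, f x + ⟪s j, x' - x⟫ ≤ -ε})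
    (xp : X) (hxpP : xp ∈ {x' : X | ∀ j, f x + ⟪s j, x' - x⟫ ≤ -ε})
    (hproj : ∀ y ∈ {x' : X | ∀ j, f x + ⟪s j, x' - x⟫ ≤ -ε}, dist x xp ≤ dist x y)
    (p : X) (hp : f p = -ε) (hpd : ‖x - p‖ ≤ κ * (f x + ε))
    (happrox : ∀ j, f x + ⟪s j, p - x⟫ - εac * ‖p - x‖ ≤ f p) :
    ‖xp - p‖ ^ 2 ≤ (1 - 1 / (3 * κ ^ 2 * L ^ 2)) * ‖x - p‖ ^ 2 := by
  set K : Set X := {x' : X | ∀ j, f x + ⟪s j, x' - x⟫ ≤ -ε} with hKdef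
  obtain ⟨j0, hj0⟩ := hL_mem
  have hL : 0 < L := hj0 ▸ norm_pos_iff.mpr (hs j0)
  -- convexity of K
  have hconv : Convex ℝ K := by
    intro a ha b hb ta tb hta htb hab
    intro j
    have hpt : ta • (a - x) + tb • (b - x) = (ta • a + tb • b) - x := by
      match_scalars <;> linarith
    have hinner : ⟪s j, (ta • a + tb • b) - x⟫ =
        ta * ⟪s j, a - x⟫ + tb * ⟪s j, b - x⟫ := by
      rw [← hpt, inner_add_right, real_inner_smul_right, real_inner_smul_right]
    have h1 := ha j
    have h2 := hb j
    rw [hinner]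
    nlinarith
  -- variational inequality
  haveI : Nonempty K := ⟨⟨xp, hxpP⟩⟩
  have hinf : ‖x - xp‖ = ⨅ w : K, ‖x - w‖ := by
    refine le_antisymm ?_ ?_
    · exact le_ciInf fun w => by
        have := hproj w w.2
        rwa [dist_eq_norm, dist_eq_norm] at this
    · exact ciInf_le ⟨0, by rintro r ⟨w, rfl⟩; exact norm_nonneg _⟩ (⟨xp, hxpP⟩ : K)
  have hvar : ∀ w ∈ K, ⟪x - xp, w - xp⟫ ≤ 0 :=
    (norm_eq_iInf_iff_real_inner_le_zero hconv hxpP).mp hinf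
  -- bound on εac * ‖p - x‖
  have hfxε : 0 < f x + ε := by linarith
  have hnorm_rev : ‖p - x‖ = ‖x - p‖ := norm_sub_rev p x
  have hac_bd : εac * ‖p - x‖ ≤ (1 / 3) * (f x + ε) := by
    rw [hnorm_rev]
    have h1 : εac * ‖x - p‖ ≤ εac * (κ * (f x + ε)) :=
      mul_le_mul_of_nonneg_left hpd hac
    nlinarith
  -- the stretched point q lies in K
  set q : X := x + (3 / 2 : ℝ) • (p - x) with hq
  have hqK : q ∈ K := by
    intro j
    have hinner : ⟪s j, q - x⟫ = (3 / 2) * ⟪s j, p - x⟫ := by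
      rw [hq, add_sub_cancel_left, real_inner_smul_right]
    have h1 := happrox j
    rw [hp] at h1
    show f x + ⟪s j, q - x⟫ ≤ -ε
    rw [hinner]
    nlinarith
  -- lower bound on ‖x - xp‖
  have hlow : ‖x - p‖ ≤ κ * L * ‖x - xp‖ := by
    have h1 := hxpP j0
    have h2 : -(‖s j0‖ * ‖xp - x‖) ≤ ⟪s j0, xp - x⟫ := by
      have ha := abs_real_inner_le_norm (s j0) (xp - x)
      have hb := neg_abs_le ⟪s j0, xp - x⟫
      linarith
    have hxpx : ‖xp - x‖ = ‖x - xp‖ := norm_sub_rev _ _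
    rw [hj0, hxpx] at h2
    -- L * ‖x - xp‖ ≥ f x + ε
    have h3 : f x + ε ≤ L * ‖x - xp‖ := by linarith
    nlinarith
  -- variational inequality applied to q
  have hv := hvar q hqK
  have hqxp : q - xp = (x - xp) - (3 / 2 : ℝ) • (x - p) := by
    rw [hq]; module
  rw [hqxp, inner_sub_right, real_inner_smul_right,
    real_inner_self_eq_norm_sq] at hv
  have hsymm : ⟪x - xp, x - p⟫ = ⟪x - p, x - xp⟫ := real_inner_comm _ _
  rw [hsymm] at hv
  -- expand the goal
  have hexp : ‖xp - p‖ ^ 2 = ‖x - p‖ ^ 2 - 2 * ⟪x - p, x - xp⟫ + ‖x - xp‖ ^ 2 := by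
    have h : xp - p = (x - p) - (x - xp) := by abel
    rw [h, norm_sub_sq_real]
  have hA2 : ‖x - p‖ ^ 2 ≤ κ ^ 2 * L ^ 2 * ‖x - xp‖ ^ 2 := by
    nlinarith [norm_nonneg (x - p), norm_nonneg (x - xp),
      mul_pos hκ hL, mul_nonneg (mul_pos hκ hL).le (norm_nonneg (x - xp))]
  have key : 1 / (3 * κ ^ 2 * L ^ 2) * ‖x - p‖ ^ 2 ≤ ‖x - xp‖ ^ 2 / 3 := by
    rw [div_mul_eq_mul_div, div_le_div_iff₀ (by positivity) (by norm_num)]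
    nlinarith
  have hring : (1 - 1 / (3 * κ ^ 2 * L ^ 2)) * ‖x - p‖ ^ 2
      = ‖x - p‖ ^ 2 - 1 / (3 * κ ^ 2 * L ^ 2) * ‖x - p‖ ^ 2 := by ring
  rw [hexp, hring]
  linarith [hv, key]
end

section
/- Let X be a real Hilbert space and let f : X → ℝ be locally Lipschitz at x̄ ∈ X with f(x̄) = 0, 0 ∉ ∂f(x̄) (Clarke subdifferential), and f approximately convex at x̄. Then there exist a point ȳ ∈ X, a radius t̄ > 0 and a number ε̄ > 0 with x̄ ∈ B(ȳ, 2t̄), such that the following invariance holds: for every x̃₁ ∈ B(ȳ, 2t̄) with f(x̃₁) > 0, every ε̃ ∈ (0, ε̄], and every finite family s^{(1)}, …, s^{(J)} ∈ ∂f(x̃₁), the polyhedron P := {x ∈ X : f(x̃₁) + ⟨s^{(j)}, x − x̃₁⟩ ≤ −ε̃ for all j ∈ {1,…,J}} is nonempty and the metric projection of x̃₁ onto P lies in B(ȳ, 2t̄). -/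
open Filter Metric Set
open scoped Topology RealInnerProductSpace NNReal

variable {X : Type*} [NormedAddCommGroup X] [InnerProductSpace ℝ X] [CompleteSpace X]

set_option maxHeartbeats 1000000 in
/-- **Invariance of a ball under a cutting-plane projection step.** Let `f` be locally
Lipschitz at `xbar` with `f xbar = 0`, `0 ∉ ∂f(xbar)`, and `f` approximately convex at
`xbar`. Then there are `ybar`, `tbar > 0` and `ε̄ > 0` with `xbar ∈ B(ybar, 2 tbar)` such
that for every `x̃₁ ∈ B(ybar, 2 tbar)` with `f x̃₁ > 0`, every `ε̃ ∈ (0, ε̄]` and every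
finite family of subgradients `s j ∈ ∂f(x̃₁)`, the polyhedron
`P = {x : f x̃₁ + ⟪s j, x − x̃₁⟫ ≤ −ε̃ for all j}` is nonempty and the metric projection
of `x̃₁` onto `P` lies in `B(ybar, 2 tbar)`. -/
theorem ball_invariance_of_projection_step
    (f : X → ℝ) (xbar : X)
    (hf : LocallyLipschitzAt f xbar)
    (hzero : f xbar = 0)
    (h0 : (0 : X) ∉ clarkeSubdiff f xbar)
    (hac : ApproxConvexAt f xbar) :
    ∃ (ybar : X) (tbar εb : ℝ), 0 < tbar ∧ 0 < εb ∧
      xbar ∈ Metric.closedBall ybar (2 * tbar) ∧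
      ∀ x1 ∈ Metric.closedBall ybar (2 * tbar), 0 < f x1 →
        ∀ εt : ℝ, 0 < εt → εt ≤ εb →
          ∀ (J : ℕ) (s : Fin J → X), (∀ j, s j ∈ clarkeSubdiff f x1) →
            (Set.Nonempty {x : X | ∀ j, f x1 + ⟪s j, x - x1⟫ ≤ -εt}) ∧
            ∀ x2 : X, x2 ∈ {x : X | ∀ j, f x1 + ⟪s j, x - x1⟫ ≤ -εt} →
              (∀ y ∈ {x : X | ∀ j, f x1 + ⟪s j, x - x1⟫ ≤ -εt},
                dist x1 x2 ≤ dist x1 y) →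
              x2 ∈ Metric.closedBall ybar (2 * tbar) := by
  classical
  -- Step 1: a descent direction
  have h1 : ∃ d : X, clarkeDirDeriv f xbar d < 0 := by
    by_contra h
    push_neg at h
    exact h0 (fun d => by simpa using h d)
  obtain ⟨d, hd⟩ := h1
  set c : ℝ := -clarkeDirDeriv f xbar d with hcdef
  have hc : 0 < c := by rw [hcdef]; linarith
  -- Step 2: boundedness of the difference quotients (from local Lipschitzness)
  obtain ⟨K, U, hU, hK⟩ := hf
  obtain ⟨ρ, hρ, hρU⟩ := Metric.nhds_basis_closedBall.mem_iff.mp hU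
  have hden : (0:ℝ) < ‖d‖ + 1 := by linarith [norm_nonneg d]
  have hbdd : Filter.IsBoundedUnder (· ≤ ·) ((𝓝 xbar) ×ˢ (𝓝[>] (0:ℝ)))
      (fun p : X × ℝ => (f (p.1 + p.2 • d) - f p.1) / p.2) := by
    refine ⟨(K : ℝ) * ‖d‖, ?_⟩
    rw [Filter.eventually_map]
    have ha : ∀ᶠ y in 𝓝 xbar, y ∈ Metric.closedBall xbar (ρ/2) :=
      Metric.closedBall_mem_nhds xbar (by linarith)
    have hb : ∀ᶠ t in 𝓝[>] (0:ℝ), t ∈ Set.Ioo (0:ℝ) (ρ/(2*(‖d‖+1))) :=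
      Ioo_mem_nhdsGT_of_mem ⟨le_refl _, by positivity⟩
    filter_upwards [ha.prod_mk hb] with p hp
    obtain ⟨hp1, hp2⟩ := hp
    have ht0 : 0 < p.2 := hp2.1
    have htη : p.2 < ρ/(2*(‖d‖+1)) := hp2.2
    have hp1U : p.1 ∈ U := hρU (by
      rw [Metric.mem_closedBall] at hp1 ⊢; linarith)
    have hnorm : ‖p.2 • d‖ = p.2 * ‖d‖ := by
      rw [norm_smul, Real.norm_eq_abs, abs_of_pos ht0]
    have htd : p.2 * ‖d‖ ≤ ρ/2 := by
      have h1 : p.2 * ‖d‖ ≤ p.2 * (‖d‖+1) := by nlinarith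
      have h2 : p.2 * (‖d‖+1) ≤ (ρ/(2*(‖d‖+1))) * (‖d‖+1) := by nlinarith
      have h3 : (ρ/(2*(‖d‖+1))) * (‖d‖+1) = ρ/2 := by field_simp
      linarith
    have hp2U : p.1 + p.2 • d ∈ U := hρU (by
      rw [Metric.mem_closedBall] at hp1 ⊢
      calc dist (p.1 + p.2 • d) xbar ≤ dist (p.1 + p.2 • d) p.1 + dist p.1 xbar :=
            dist_triangle _ _ _
        _ ≤ ρ/2 + ρ/2 := by
            rw [dist_self_add_left, hnorm]; linarith
        _ = ρ := by ring)
    have hdl := hK.dist_le_mul _ hp2U _ hp1U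
    rw [dist_self_add_left, hnorm] at hdl
    have hdl2 : f (p.1 + p.2 • d) - f p.1 ≤ (K:ℝ) * (p.2 * ‖d‖) := by
      have := le_abs_self (f (p.1 + p.2 • d) - f p.1)
      rw [Real.dist_eq] at hdl
      linarith
    rw [div_le_iff₀ ht0]
    nlinarith
  -- Step 3: eventual strict decrease and its pointwise consequence at xbar
  have hlim : Filter.limsup (fun p : X × ℝ => (f (p.1 + p.2 • d) - f p.1) / p.2)
      ((𝓝 xbar) ×ˢ (𝓝[>] (0:ℝ))) < -(c/2) := by
    have : clarkeDirDeriv f xbar d < -(c/2) := by rw [hcdef]; linarith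
    exact this
  have hev := Filter.eventually_lt_of_limsup_lt hlim hbdd
  rw [Filter.eventually_prod_iff] at hev
  obtain ⟨pa, hpa, pb, hpb, hpev⟩ := hev
  obtain ⟨r2, hr2, hr2sub⟩ := mem_nhdsGT_iff_exists_Ioo_subset.mp hpb
  rw [Set.mem_Ioi] at hr2
  have key : ∀ t : ℝ, 0 < t → t < r2 → f (xbar + t • d) < -(c/2) * t := by
    intro t ht htr
    have h := hpev hpa.self_of_nhds (hr2sub ⟨ht, htr⟩)
    rw [div_lt_iff₀ ht, hzero] at h
    linarith
  -- Step 4: choose the constants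
  obtain ⟨δ, hδpos, hδ⟩ := hac (c/(4*(‖d‖+1))) (by positivity)
  have hm : 0 < min r2 δ := lt_min hr2 hδpos
  set τ : ℝ := min r2 δ / (2*‖d‖+2) with hτdef
  have hτ : 0 < τ := by positivity
  have hτmul : τ * (2*‖d‖+2) = min r2 δ := by
    rw [hτdef]; field_simp
  have hτr2 : τ < r2 := by
    nlinarith [min_le_left r2 δ, norm_nonneg d]
  have hτδ : τ * (2*‖d‖+2) ≤ δ := by
    rw [hτmul]; exact min_le_right _ _
  set yb : X := xbar + τ • d with hybdef
  have hfy : f yb < -(c/2) * τ := key τ hτ hτr2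
  have hnτd : ‖τ • d‖ = τ * ‖d‖ := by
    rw [norm_smul, Real.norm_eq_abs, abs_of_pos hτ]
  refine ⟨yb, τ*(‖d‖+1)/2, c*τ/4, by positivity, by positivity, ?_, ?_⟩
  · rw [Metric.mem_closedBall, hybdef, dist_self_add_right, hnτd]
    nlinarith [norm_nonneg d]
  intro x1 hx1 hfx1 εt hεt hεtb J s hs
  rw [Metric.mem_closedBall] at hx1
  have hx1y : dist x1 yb ≤ τ * (‖d‖+1) := by linarith
  have hybx : dist yb xbar = τ * ‖d‖ := by
    rw [hybdef, dist_self_add_left, hnτd]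
  have hx1δ : x1 ∈ Metric.closedBall xbar δ := by
    rw [Metric.mem_closedBall]
    have := dist_triangle x1 yb xbar
    nlinarith [norm_nonneg d]
  have hyδ : yb ∈ Metric.closedBall xbar δ := by
    rw [Metric.mem_closedBall, hybx]
    nlinarith [norm_nonneg d]
  have hybn : ‖yb - x1‖ ≤ τ * (‖d‖+1) := by
    rw [← dist_eq_norm, dist_comm]; exact hx1y
  -- yb belongs to the polyhedron
  have hyP : ∀ j, f x1 + ⟪s j, yb - x1⟫ ≤ -εt := by
    intro j
    have h := hδ x1 hx1δ yb hyδ (s j) (hs j)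
    have hb1 : (c/(4*(‖d‖+1))) * ‖yb - x1‖ ≤ (c/(4*(‖d‖+1))) * (τ*(‖d‖+1)) := by
      have hnn : (0:ℝ) ≤ c/(4*(‖d‖+1)) := by positivity
      nlinarith
    have hb2 : (c/(4*(‖d‖+1))) * (τ*(‖d‖+1)) = c*τ/4 := by
      field_simp
    linarith
  refine ⟨⟨yb, hyP⟩, ?_⟩
  intro x2 hx2 hmin
  simp only [Set.mem_setOf_eq] at hx2
  -- projection inequality: the angle at x2 is obtuse
  have hIP : ⟪x1 - x2, yb - x2⟫ ≤ 0 := by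
    by_contra hI
    push_neg at hI
    have hne : yb - x2 ≠ 0 := by
      intro h
      rw [h, inner_zero_right] at hI
      exact lt_irrefl 0 hI
    have hq : 0 < ‖yb - x2‖^2 := pow_pos (norm_pos_iff.mpr hne) 2
    set I : ℝ := ⟪x1 - x2, yb - x2⟫ with hIdef
    set q : ℝ := ‖yb - x2‖^2 with hqdef
    set θ : ℝ := min 1 (I/q) with hθdef
    have hθ0 : 0 < θ := lt_min one_pos (div_pos hI hq)
    have hθ1 : θ ≤ 1 := min_le_left _ _
    have hθq : θ * q ≤ I := by
      have h1 : θ ≤ I/q := min_le_right _ _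
      calc θ * q ≤ (I/q) * q := by nlinarith
        _ = I := by field_simp
    have hw : ∀ j, f x1 + ⟪s j, (x2 + θ•(yb - x2)) - x1⟫ ≤ -εt := by
      intro j
      have hrw : (x2 + θ•(yb - x2)) - x1 = (1-θ)•(x2 - x1) + θ•(yb - x1) := by
        module
      rw [hrw, inner_add_right, real_inner_smul_right, real_inner_smul_right]
      nlinarith [hx2 j, hyP j, hθ0.le, hθ1]
    have hle := hmin _ hw
    have hsq : dist x1 x2 ^ 2 ≤ dist x1 (x2 + θ•(yb - x2)) ^ 2 := by
      exact pow_le_pow_left₀ dist_nonneg hle 2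
    have he : dist x1 (x2 + θ•(yb - x2)) ^ 2 = dist x1 x2 ^ 2 - 2*(θ*I) + θ^2*q := by
      rw [dist_eq_norm, dist_eq_norm]
      have hrw : x1 - (x2 + θ•(yb - x2)) = (x1 - x2) - θ•(yb - x2) := by module
      rw [hrw, norm_sub_sq_real, real_inner_smul_right, norm_smul,
        Real.norm_eq_abs, abs_of_pos hθ0, mul_pow, hIdef, hqdef]
    nlinarith [hθ0, hI, hθq]
  -- conclude: projection is closer to yb than x1 is
  have hfinal : dist x2 yb ^ 2 ≤ dist x1 yb ^ 2 := by
    have h1 : dist x1 yb ^ 2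
        = dist x1 x2 ^ 2 - 2*⟪x1 - x2, yb - x2⟫ + dist x2 yb ^ 2 := by
      rw [dist_eq_norm, dist_eq_norm, dist_eq_norm]
      have hrw : x1 - yb = (x1 - x2) - (yb - x2) := by module
      rw [hrw, norm_sub_sq_real, show ‖x2 - yb‖ = ‖yb - x2‖ from norm_sub_rev _ _]
    nlinarith [sq_nonneg (dist x1 x2)]
  have hab : dist x2 yb ≤ dist x1 yb :=
    le_of_pow_le_pow_left₀ two_ne_zero dist_nonneg hfinal
  rw [Metric.mem_closedBall]
  linarith
end
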